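/- arXiv:1604.06626 — 2 statements merged into one kernel-verified Lean document; each statement's English description precedes it below -/
import Mathlib

section
/- For any matrix M̂ ∈ X that is a local minimum of the pull-back Fréchet function f_n(Ẑ) = (1/n) ∑_{i=1}^n min_{X̂ ∈ X_i} ‖X̂ − Ẑ‖², there exist representations X̂_i ∈ X_i in optimal position with M̂ (i.e., achieving the minimum ‖X̂_i − M̂‖ = δ(X_i, M)) such that M̂ = (1/n) ∑_{i=1}^n X̂_i. (Mean Partition Theorem) -/
open Finset

noncomputable section

def LP (l m : ℕ) : Set (Matrix (Fin l) (Fin m) ℝ) :=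
  {X | (∀ k j, X k j ∈ Set.Icc (0:ℝ) 1) ∧ ∀ j, ∑ k, X k j = 1}

def act {l m : ℕ} (σ : Equiv.Perm (Fin l)) (X : Matrix (Fin l) (Fin m) ℝ) :
    Matrix (Fin l) (Fin m) ℝ :=
  fun k j => X (σ⁻¹ k) j

def orbit {l m : ℕ} (X : Matrix (Fin l) (Fin m) ℝ) : Set (Matrix (Fin l) (Fin m) ℝ) :=
  {Y | ∃ σ : Equiv.Perm (Fin l), act σ X = Y}

def finner {l m : ℕ} (A B : Matrix (Fin l) (Fin m) ℝ) : ℝ :=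
  ∑ k, ∑ j, A k j * B k j

def fnorm {l m : ℕ} (A : Matrix (Fin l) (Fin m) ℝ) : ℝ :=
  Real.sqrt (finner A A)

def pdist {l m : ℕ} (A B : Set (Matrix (Fin l) (Fin m) ℝ)) : ℝ :=
  sInf {d | ∃ X ∈ A, ∃ Y ∈ B, d = fnorm (X - Y)}

namespace MPT

variable {l m : ℕ}

lemma finner_self_nonneg (A : Matrix (Fin l) (Fin m) ℝ) : 0 ≤ finner A A := by
  apply Finset.sum_nonneg; intro k _; apply Finset.sum_nonneg; intro j _
  exact mul_self_nonneg _

lemma fnorm_nonneg (A : Matrix (Fin l) (Fin m) ℝ) : 0 ≤ fnorm A := Real.sqrt_nonneg _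

lemma fnorm_sq (A : Matrix (Fin l) (Fin m) ℝ) : fnorm A ^ 2 = finner A A := by
  rw [fnorm, Real.sq_sqrt (finner_self_nonneg A)]

lemma act_act (σ τ : Equiv.Perm (Fin l)) (A : Matrix (Fin l) (Fin m) ℝ) :
    act σ (act τ A) = act (σ * τ) A := by
  funext k j; simp [act, Equiv.Perm.mul_apply]

lemma act_one (A : Matrix (Fin l) (Fin m) ℝ) : act 1 A = A := by
  funext k j; simp [act]

lemma mem_orbit_self (A : Matrix (Fin l) (Fin m) ℝ) : A ∈ orbit A := ⟨1, act_one A⟩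

lemma act_sub (σ : Equiv.Perm (Fin l)) (A B : Matrix (Fin l) (Fin m) ℝ) :
    act σ (A - B) = act σ A - act σ B := by
  funext k j; simp [act, Matrix.sub_apply]

lemma finner_act (σ : Equiv.Perm (Fin l)) (A B : Matrix (Fin l) (Fin m) ℝ) :
    finner (act σ A) (act σ B) = finner A B := by
  unfold finner act
  exact Fintype.sum_equiv σ⁻¹ _ _ (fun k => rfl)

lemma fnorm_act (σ : Equiv.Perm (Fin l)) (A : Matrix (Fin l) (Fin m) ℝ) :
    fnorm (act σ A) = fnorm A := by
  rw [fnorm, finner_act, fnorm]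

lemma act_mem_LP (σ : Equiv.Perm (Fin l)) {A : Matrix (Fin l) (Fin m) ℝ} (hA : A ∈ LP l m) :
    act σ A ∈ LP l m := by
  refine ⟨fun k j => hA.1 _ j, fun j => ?_⟩
  rw [← hA.2 j]
  exact Fintype.sum_equiv σ⁻¹ _ _ (fun k => rfl)

lemma finner_smul_diff (C D : Matrix (Fin l) (Fin m) ℝ) (t : ℝ) :
    finner (C - t • D) (C - t • D)
      = finner C C - 2 * t * finner C D + t ^ 2 * finner D D := by
  unfold finner
  simp only [Matrix.sub_apply, Matrix.smul_apply, smul_eq_mul]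
  simp only [Finset.mul_sum, ← Finset.sum_sub_distrib, ← Finset.sum_add_distrib]
  exact Finset.sum_congr rfl fun k _ => Finset.sum_congr rfl fun j _ => by ring

lemma finner_smul_smul (A : Matrix (Fin l) (Fin m) ℝ) (t : ℝ) :
    finner (t • A) (t • A) = t ^ 2 * finner A A := by
  unfold finner
  simp only [Matrix.smul_apply, smul_eq_mul, Finset.mul_sum]
  exact Finset.sum_congr rfl fun k _ => Finset.sum_congr rfl fun j _ => by ring

lemma fnorm_smul_nonneg (A : Matrix (Fin l) (Fin m) ℝ) {t : ℝ} (ht : 0 ≤ t) :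
    fnorm (t • A) = t * fnorm A := by
  rw [fnorm, finner_smul_smul, Real.sqrt_mul (sq_nonneg t), Real.sqrt_sq ht, fnorm]

lemma finner_sum_left {n : ℕ} (C : Fin n → Matrix (Fin l) (Fin m) ℝ)
    (D : Matrix (Fin l) (Fin m) ℝ) :
    finner (∑ i, C i) D = ∑ i, finner (C i) D := by
  unfold finner
  have h1 : ∀ k : Fin l, ∑ j, ∑ i, C i k j * D k j = ∑ i, ∑ j, C i k j * D k j :=
    fun k => Finset.sum_comm
  simp only [Matrix.sum_apply, Finset.sum_mul, h1]
  exact Finset.sum_comm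

lemma finner_smul_left (A B : Matrix (Fin l) (Fin m) ℝ) (c : ℝ) :
    finner (c • A) B = c * finner A B := by
  unfold finner
  simp only [Matrix.smul_apply, smul_eq_mul, Finset.mul_sum, mul_assoc]

lemma finner_self_eq_zero {D : Matrix (Fin l) (Fin m) ℝ} (h : finner D D = 0) : D = 0 := by
  funext k j
  have h1 := (Finset.sum_eq_zero_iff_of_nonneg
    (fun k _ => Finset.sum_nonneg fun j _ => mul_self_nonneg (D k j))).mp h k (Finset.mem_univ k)
  have h2 := (Finset.sum_eq_zero_iff_of_nonneg
    (fun j _ => mul_self_nonneg (D k j))).mp h1 j (Finset.mem_univ j)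
  simpa [mul_self_eq_zero] using h2

lemma mem_LP_line {P Q : Matrix (Fin l) (Fin m) ℝ} (hP : P ∈ LP l m) (hQ : Q ∈ LP l m)
    {t : ℝ} (h0 : 0 ≤ t) (h1 : t ≤ 1) : P + t • (Q - P) ∈ LP l m := by
  constructor
  · intro k j
    have hp := hP.1 k j; have hq := hQ.1 k j
    simp only [Set.mem_Icc, Matrix.add_apply, Matrix.smul_apply, Matrix.sub_apply,
      smul_eq_mul] at *
    constructor <;> nlinarith [hp.1, hp.2, hq.1, hq.2]
  · intro j
    simp only [Matrix.add_apply, Matrix.smul_apply, Matrix.sub_apply, smul_eq_mul]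
    rw [Finset.sum_add_distrib, ← Finset.mul_sum, Finset.sum_sub_distrib, hP.2, hQ.2]
    ring

end MPT

theorem mean_partition_theorem (l m n : ℕ) (hn : 0 < n)
    (X : Fin n → Matrix (Fin l) (Fin m) ℝ) (hX : ∀ i, X i ∈ LP l m)
    (M : Matrix (Fin l) (Fin m) ℝ) (hM : M ∈ LP l m)
    (hloc : ∃ ε > (0:ℝ), ∀ Z ∈ LP l m, fnorm (Z - M) < ε →
      (n : ℝ)⁻¹ * ∑ i, sInf {r : ℝ | ∃ A ∈ orbit (X i), r = (fnorm (A - M)) ^ 2} ≤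
      (n : ℝ)⁻¹ * ∑ i, sInf {r : ℝ | ∃ A ∈ orbit (X i), r = (fnorm (A - Z)) ^ 2}) :
    ∃ A : Fin n → Matrix (Fin l) (Fin m) ℝ,
      (∀ i, A i ∈ orbit (X i)) ∧
      (∀ i, fnorm (A i - M) = pdist (orbit (X i)) (orbit M)) ∧
      M = (n : ℝ)⁻¹ • ∑ i, A i := by
  classical
  have hnR : (0:ℝ) < (n:ℝ) := by exact_mod_cast hn
  -- choose optimal representatives
  have hmin : ∀ i : Fin n, ∃ σ : Equiv.Perm (Fin l),
      ∀ τ : Equiv.Perm (Fin l), fnorm (act σ (X i) - M) ≤ fnorm (act τ (X i) - M) := by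
    intro i
    obtain ⟨σ, -, hσ⟩ := Finset.exists_min_image Finset.univ
      (fun τ : Equiv.Perm (Fin l) => fnorm (act τ (X i) - M)) ⟨1, Finset.mem_univ 1⟩
    exact ⟨σ, fun τ => hσ τ (Finset.mem_univ τ)⟩
  choose σ hσ using hmin
  set A : Fin n → Matrix (Fin l) (Fin m) ℝ := fun i => act (σ i) (X i) with hAdef
  have hAorb : ∀ i, A i ∈ orbit (X i) := fun i => ⟨σ i, rfl⟩
  have hAopt : ∀ i, ∀ P ∈ orbit (X i), fnorm (A i - M) ≤ fnorm (P - M) := by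
    rintro i P ⟨τ, rfl⟩; exact hσ i τ
  have hALP : ∀ i, A i ∈ LP l m := fun i => MPT.act_mem_LP _ (hX i)
  -- pdist property
  have hpd : ∀ i, fnorm (A i - M) = pdist (orbit (X i)) (orbit M) := by
    intro i
    symm
    apply IsLeast.csInf_eq
    constructor
    · exact ⟨A i, hAorb i, M, MPT.mem_orbit_self M, rfl⟩
    · rintro d ⟨P, hP, Q, ⟨τ, rfl⟩, rfl⟩
      obtain ⟨ρ, hρ⟩ := hP
      have hmem : act τ⁻¹ P ∈ orbit (X i) := ⟨τ⁻¹ * ρ, by rw [← MPT.act_act, hρ]⟩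
      calc fnorm (A i - M) ≤ fnorm (act τ⁻¹ P - M) := hAopt i _ hmem
        _ = fnorm (P - act τ M) := by
            conv_rhs => rw [← MPT.fnorm_act τ⁻¹ (P - act τ M)]
            rw [MPT.act_sub, MPT.act_act, inv_mul_cancel, MPT.act_one]
  -- sInf of squared distances
  have hbdd : ∀ (Z : Matrix (Fin l) (Fin m) ℝ) (i : Fin n),
      BddBelow {r : ℝ | ∃ P ∈ orbit (X i), r = fnorm (P - Z) ^ 2} := by
    intro Z i
    refine ⟨0, ?_⟩
    rintro r ⟨P, hP, rfl⟩
    positivity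
  have hle : ∀ (Z : Matrix (Fin l) (Fin m) ℝ) (i : Fin n),
      sInf {r : ℝ | ∃ P ∈ orbit (X i), r = fnorm (P - Z) ^ 2} ≤ fnorm (A i - Z) ^ 2 :=
    fun Z i => csInf_le (hbdd Z i) ⟨A i, hAorb i, rfl⟩
  have heqM : ∀ i : Fin n,
      sInf {r : ℝ | ∃ P ∈ orbit (X i), r = fnorm (P - M) ^ 2} = fnorm (A i - M) ^ 2 := by
    intro i
    apply IsLeast.csInf_eq
    refine ⟨⟨A i, hAorb i, rfl⟩, ?_⟩
    rintro r ⟨P, hP, rfl⟩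
    exact pow_le_pow_left₀ (MPT.fnorm_nonneg _) (hAopt i P hP) 2
  refine ⟨A, hAorb, hpd, ?_⟩
  set Abar : Matrix (Fin l) (Fin m) ℝ := (n:ℝ)⁻¹ • ∑ i, A i with hAbar
  set D : Matrix (Fin l) (Fin m) ℝ := Abar - M with hD
  suffices hDD : finner D D = 0 by
    have : D = 0 := MPT.finner_self_eq_zero hDD
    have : Abar = M := by rwa [hD, sub_eq_zero] at this
    rw [← this]
  by_contra h0
  have hq : 0 < finner D D := lt_of_le_of_ne (MPT.finner_self_nonneg D) (Ne.symm h0)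
  have hfD : 0 < fnorm D := Real.sqrt_pos.mpr hq
  obtain ⟨ε, hε, hloc⟩ := hloc
  set t : ℝ := min 1 (ε / (2 * fnorm D)) with ht
  have ht0 : 0 < t := lt_min one_pos (by positivity)
  have ht1 : t ≤ 1 := min_le_left _ _
  -- Abar ∈ LP
  have hAbarLP : Abar ∈ LP l m := by
    constructor
    · intro k j
      have happ : Abar k j = (n:ℝ)⁻¹ * ∑ i, A i k j := by
        rw [hAbar]; simp [Matrix.sum_apply]
      constructor
      · rw [happ]
        apply mul_nonneg (by positivity)
        exact Finset.sum_nonneg fun i _ => ((hALP i).1 k j).1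
      · rw [happ]
        have hs : ∑ i, A i k j ≤ (n:ℝ) := by
          calc ∑ i, A i k j ≤ ∑ _i : Fin n, (1:ℝ) :=
                Finset.sum_le_sum fun i _ => ((hALP i).1 k j).2
            _ = (n:ℝ) := by simp
        calc (n:ℝ)⁻¹ * ∑ i, A i k j ≤ (n:ℝ)⁻¹ * (n:ℝ) :=
              mul_le_mul_of_nonneg_left hs (by positivity)
          _ = 1 := inv_mul_cancel₀ (ne_of_gt hnR)
    · intro j
      have : ∀ k, Abar k j = (n:ℝ)⁻¹ * ∑ i, A i k j := by
        intro k; rw [hAbar]; simp [Matrix.sum_apply]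
      simp only [this]
      rw [← Finset.mul_sum, Finset.sum_comm]
      have : ∀ i : Fin n, ∑ k, A i k j = 1 := fun i => (hALP i).2 j
      simp only [this]
      simp [inv_mul_cancel₀ (ne_of_gt hnR)]
  -- the perturbed point
  set Z : Matrix (Fin l) (Fin m) ℝ := M + t • D with hZ
  have hZLP : Z ∈ LP l m := MPT.mem_LP_line hM hAbarLP (le_of_lt ht0) ht1
  have hZclose : fnorm (Z - M) < ε := by
    have : Z - M = t • D := by rw [hZ, add_sub_cancel_left]
    rw [this, MPT.fnorm_smul_nonneg D (le_of_lt ht0)]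
    calc t * fnorm D ≤ (ε / (2 * fnorm D)) * fnorm D :=
          mul_le_mul_of_nonneg_right (min_le_right _ _) (le_of_lt hfD)
      _ = ε / 2 := by field_simp
      _ < ε := by linarith
  have hkey := hloc Z hZLP hZclose
  -- compute the sums
  have hsumD : ∑ i, (A i - M) = (n:ℝ) • D := by
    have h1 : (n:ℝ) • Abar = ∑ i, A i := by
      rw [hAbar, smul_smul, mul_inv_cancel₀ (ne_of_gt hnR), one_smul]
    rw [hD, smul_sub, h1, Finset.sum_sub_distrib, Finset.sum_const, Finset.card_univ,
      Fintype.card_fin, ← Nat.cast_smul_eq_nsmul ℝ n M]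
  have hcross : ∑ i, finner (A i - M) D = (n:ℝ) * finner D D := by
    rw [← MPT.finner_sum_left, hsumD, MPT.finner_smul_left]
  have hAZ : ∀ i : Fin n, fnorm (A i - Z) ^ 2
      = fnorm (A i - M) ^ 2 - 2 * t * finner (A i - M) D + t ^ 2 * finner D D := by
    intro i
    rw [MPT.fnorm_sq, MPT.fnorm_sq, hZ, sub_add_eq_sub_sub, MPT.finner_smul_diff]
  have hRHS : ∑ i, fnorm (A i - Z) ^ 2
      = ∑ i, fnorm (A i - M) ^ 2 - 2 * t * ((n:ℝ) * finner D D)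
        + (n:ℝ) * (t ^ 2 * finner D D) := by
    simp only [hAZ]
    rw [Finset.sum_add_distrib, Finset.sum_sub_distrib, ← Finset.mul_sum, hcross,
      Finset.sum_const, Finset.card_univ, Fintype.card_fin, nsmul_eq_mul]
  have hchain : (n:ℝ)⁻¹ * ∑ i, fnorm (A i - M) ^ 2
      ≤ (n:ℝ)⁻¹ * (∑ i, fnorm (A i - M) ^ 2 - 2 * t * ((n:ℝ) * finner D D)
        + (n:ℝ) * (t ^ 2 * finner D D)) := by
    calc (n:ℝ)⁻¹ * ∑ i, fnorm (A i - M) ^ 2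
        = (n:ℝ)⁻¹ * ∑ i, sInf {r : ℝ | ∃ P ∈ orbit (X i), r = fnorm (P - M) ^ 2} := by
          simp only [heqM]
      _ ≤ (n:ℝ)⁻¹ * ∑ i, sInf {r : ℝ | ∃ P ∈ orbit (X i), r = fnorm (P - Z) ^ 2} := hkey
      _ ≤ (n:ℝ)⁻¹ * ∑ i, fnorm (A i - Z) ^ 2 :=
          mul_le_mul_of_nonneg_left (Finset.sum_le_sum fun i _ => hle Z i) (by positivity)
      _ = _ := by rw [hRHS]
  have hS := (mul_le_mul_iff_right₀ (inv_pos.mpr hnR)).mp hchain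
  nlinarith [hS, mul_pos (mul_pos hnR hq) ht0, ht1]
end
end

section
/- If 𝔛 = (X̂_1,...,X̂_n) is an optimal multiple alignment (a global minimizer of g_n(𝔛) = (1/n²)∑_{i,j}‖X̂_i − X̂_j‖² over all alignments of the sample), then the partition represented by the mean M_𝔛 = (1/n)∑_i X̂_i is a mean partition, i.e., a global minimizer of the Fréchet function F_n(Z) = (1/n)∑_i δ(X_i, Z)². Moreover, every mean partition arises this way; i.e., the map 𝔛 ↦ π(M_𝔛) from optimal alignments to mean partitions is surjective. (Equivalence of mean partitions and optimal multiple alignments) -/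
open Finset

noncomputable section

section Aux

variable {l m : ℕ}

lemma finner_comm (A B : Matrix (Fin l) (Fin m) ℝ) : finner A B = finner B A := by
  simp [finner, mul_comm]

lemma finner_add_left (A B C : Matrix (Fin l) (Fin m) ℝ) :
    finner (A + B) C = finner A C + finner B C := by
  simp [finner, Matrix.add_apply, add_mul, Finset.sum_add_distrib]

lemma finner_add_right (A B C : Matrix (Fin l) (Fin m) ℝ) :
    finner A (B + C) = finner A B + finner A C := by
  rw [finner_comm, finner_add_left, finner_comm B A, finner_comm C A]

lemma finner_zero_left (B : Matrix (Fin l) (Fin m) ℝ) : finner 0 B = 0 := by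
  simp [finner]

lemma finner_sum_left {ι : Type*} (s : Finset ι) (f : ι → Matrix (Fin l) (Fin m) ℝ)
    (B : Matrix (Fin l) (Fin m) ℝ) :
    finner (∑ i ∈ s, f i) B = ∑ i ∈ s, finner (f i) B := by
  classical
  induction s using Finset.induction with
  | empty => simp [finner_zero_left]
  | insert _ _ h ih => rw [Finset.sum_insert h, finner_add_left, ih, Finset.sum_insert h]

lemma finner_sum_right {ι : Type*} (s : Finset ι) (f : ι → Matrix (Fin l) (Fin m) ℝ)
    (B : Matrix (Fin l) (Fin m) ℝ) :
    finner B (∑ i ∈ s, f i) = ∑ i ∈ s, finner B (f i) := by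
  rw [finner_comm, finner_sum_left]
  exact Finset.sum_congr rfl fun i _ => finner_comm _ _

lemma finner_nonneg (A : Matrix (Fin l) (Fin m) ℝ) : 0 ≤ finner A A :=
  Finset.sum_nonneg fun k _ => Finset.sum_nonneg fun j _ => mul_self_nonneg _

lemma eq_zero_of_finner_self {A : Matrix (Fin l) (Fin m) ℝ} (h : finner A A = 0) : A = 0 := by
  have h1 := (Finset.sum_eq_zero_iff_of_nonneg
    (fun k _ => Finset.sum_nonneg fun j _ => mul_self_nonneg (A k j))).mp h
  funext k j
  have h2 := (Finset.sum_eq_zero_iff_of_nonneg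
    (fun j _ => mul_self_nonneg (A k j))).mp (h1 k (Finset.mem_univ k)) j (Finset.mem_univ j)
  exact mul_self_eq_zero.mp h2

lemma fnorm_sq (A : Matrix (Fin l) (Fin m) ℝ) : fnorm A ^ 2 = finner A A :=
  Real.sq_sqrt (finner_nonneg A)

lemma fnorm_nonneg (A : Matrix (Fin l) (Fin m) ℝ) : 0 ≤ fnorm A :=
  Real.sqrt_nonneg _

lemma act_one (X : Matrix (Fin l) (Fin m) ℝ) : act 1 X = X := by
  funext k j; simp [act]

lemma act_act (σ τ : Equiv.Perm (Fin l)) (X : Matrix (Fin l) (Fin m) ℝ) :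
    act σ (act τ X) = act (σ * τ) X := by
  funext k j; simp [act, mul_inv_rev]

lemma act_sub (σ : Equiv.Perm (Fin l)) (X Y : Matrix (Fin l) (Fin m) ℝ) :
    act σ (X - Y) = act σ X - act σ Y := by
  funext k j; simp [act, Matrix.sub_apply]

lemma finner_act (σ : Equiv.Perm (Fin l)) (A B : Matrix (Fin l) (Fin m) ℝ) :
    finner (act σ A) (act σ B) = finner A B := by
  unfold finner act
  exact Equiv.sum_comp (σ⁻¹ : Equiv.Perm (Fin l)) (fun k => ∑ j, A k j * B k j)

lemma fnorm_act (σ : Equiv.Perm (Fin l)) (A : Matrix (Fin l) (Fin m) ℝ) :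
    fnorm (act σ A) = fnorm A := by
  unfold fnorm; rw [finner_act]

lemma mem_orbit_self (X : Matrix (Fin l) (Fin m) ℝ) : X ∈ orbit X :=
  ⟨1, act_one X⟩

lemma act_mem_orbit (σ : Equiv.Perm (Fin l)) (X : Matrix (Fin l) (Fin m) ℝ) :
    act σ X ∈ orbit X := ⟨σ, rfl⟩

lemma pdist_set_eq (X Y : Matrix (Fin l) (Fin m) ℝ) :
    {d | ∃ X' ∈ orbit X, ∃ Y' ∈ orbit Y, d = fnorm (X' - Y')}
      = Set.range (fun σ : Equiv.Perm (Fin l) => fnorm (act σ X - Y)) := by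
  ext d
  constructor
  · rintro ⟨X', ⟨σ, rfl⟩, Y', ⟨τ, rfl⟩, rfl⟩
    refine ⟨τ⁻¹ * σ, ?_⟩
    show fnorm (act (τ⁻¹ * σ) X - Y) = _
    have h : act (τ⁻¹ * σ) X - Y = act τ⁻¹ (act σ X - act τ Y) := by
      rw [act_sub, act_act, act_act, inv_mul_cancel, act_one]
    rw [h, fnorm_act]
  · rintro ⟨σ, rfl⟩
    exact ⟨act σ X, act_mem_orbit σ X, Y, mem_orbit_self Y, rfl⟩

lemma pdist_exists (X Y : Matrix (Fin l) (Fin m) ℝ) :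
    ∃ σ : Equiv.Perm (Fin l), pdist (orbit X) (orbit Y) = fnorm (act σ X - Y) := by
  have hmem : sInf (Set.range fun σ : Equiv.Perm (Fin l) => fnorm (act σ X - Y)) ∈
      Set.range fun σ : Equiv.Perm (Fin l) => fnorm (act σ X - Y) :=
    Set.Nonempty.csInf_mem (Set.range_nonempty _) (Set.finite_range _)
  obtain ⟨σ, hσ⟩ := hmem
  exact ⟨σ, by rw [pdist, pdist_set_eq, ← hσ]⟩

lemma pdist_nonneg (X Y : Matrix (Fin l) (Fin m) ℝ) : 0 ≤ pdist (orbit X) (orbit Y) := by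
  obtain ⟨σ, hσ⟩ := pdist_exists X Y
  rw [hσ]; exact fnorm_nonneg _

lemma pdist_le {X Y X' Y' : Matrix (Fin l) (Fin m) ℝ} (hX' : X' ∈ orbit X) (hY' : Y' ∈ orbit Y) :
    pdist (orbit X) (orbit Y) ≤ fnorm (X' - Y') := by
  rw [pdist, pdist_set_eq]
  apply csInf_le ((Set.finite_range _).bddBelow)
  rw [← pdist_set_eq]
  exact ⟨X', hX', Y', hY', rfl⟩

lemma pdist_sq_le {X Y X' Y' : Matrix (Fin l) (Fin m) ℝ} (hX' : X' ∈ orbit X) (hY' : Y' ∈ orbit Y) :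
    pdist (orbit X) (orbit Y) ^ 2 ≤ fnorm (X' - Y') ^ 2 :=
  pow_le_pow_left₀ (pdist_nonneg X Y) (pdist_le hX' hY') 2

end Aux

section Var

variable {l m : ℕ} {n : ℕ}

lemma sum_sub_mean_eq_zero (hn : 0 < n) (A : Fin n → Matrix (Fin l) (Fin m) ℝ) :
    ∑ i, (A i - (n:ℝ)⁻¹ • ∑ j, A j) = 0 := by
  have hne : (n:ℝ) ≠ 0 := Nat.cast_ne_zero.mpr hn.ne'
  rw [Finset.sum_sub_distrib, Finset.sum_const, Finset.card_univ, Fintype.card_fin,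
    ← Nat.cast_smul_eq_nsmul ℝ, smul_smul, mul_inv_cancel₀ hne, one_smul, sub_self]

lemma finner_zero_right (B : Matrix (Fin l) (Fin m) ℝ) : finner B 0 = 0 := by
  simp [finner]

lemma finner_neg_neg (u v : Matrix (Fin l) (Fin m) ℝ) : finner (-u) (-v) = finner u v := by
  simp [finner, Matrix.neg_apply]

lemma finner_expand (u w : Matrix (Fin l) (Fin m) ℝ) :
    finner (u + w) (u + w) = finner u u + 2 * finner u w + finner w w := by
  rw [finner_add_left, finner_add_right, finner_add_right, finner_comm w u]; ring

lemma sum_var (hn : 0 < n) (A : Fin n → Matrix (Fin l) (Fin m) ℝ)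
    (c : Matrix (Fin l) (Fin m) ℝ) :
    ∑ i, finner (A i - c) (A i - c)
      = ∑ i, finner (A i - (n:ℝ)⁻¹ • ∑ j, A j) (A i - (n:ℝ)⁻¹ • ∑ j, A j)
        + (n:ℝ) * finner ((n:ℝ)⁻¹ • ∑ j, A j - c) ((n:ℝ)⁻¹ • ∑ j, A j - c) := by
  set μ : Matrix (Fin l) (Fin m) ℝ := (n:ℝ)⁻¹ • ∑ j, A j with hμ
  have hsum : ∑ i, (A i - μ) = 0 := sum_sub_mean_eq_zero hn A
  have expand : ∀ i, finner (A i - c) (A i - c)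
      = finner (A i - μ) (A i - μ) + 2 * finner (A i - μ) (μ - c) + finner (μ - c) (μ - c) := by
    intro i
    have h : A i - c = (A i - μ) + (μ - c) := by abel
    rw [h, finner_expand]
  calc ∑ i, finner (A i - c) (A i - c)
      = ∑ i, (finner (A i - μ) (A i - μ) + 2 * finner (A i - μ) (μ - c)
          + finner (μ - c) (μ - c)) := Finset.sum_congr rfl fun i _ => expand i
    _ = ∑ i, finner (A i - μ) (A i - μ) + 2 * finner (∑ i, (A i - μ)) (μ - c)
          + (n:ℝ) * finner (μ - c) (μ - c) := by
        rw [Finset.sum_add_distrib, Finset.sum_add_distrib, finner_sum_left, ← Finset.mul_sum,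
          Finset.sum_const, Finset.card_univ, Fintype.card_fin, nsmul_eq_mul]
    _ = ∑ i, finner (A i - μ) (A i - μ) + (n:ℝ) * finner (μ - c) (μ - c) := by
        rw [hsum, finner_zero_left, mul_zero, add_zero]

lemma sum_sum_var (hn : 0 < n) (A : Fin n → Matrix (Fin l) (Fin m) ℝ) :
    ∑ i, ∑ j, finner (A i - A j) (A i - A j)
      = 2 * (n:ℝ) * ∑ i, finner (A i - (n:ℝ)⁻¹ • ∑ j, A j) (A i - (n:ℝ)⁻¹ • ∑ j, A j) := by
  set μ : Matrix (Fin l) (Fin m) ℝ := (n:ℝ)⁻¹ • ∑ j, A j with hμ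
  have hsum : ∑ i, (A i - μ) = 0 := sum_sub_mean_eq_zero hn A
  have expand : ∀ i j, finner (A i - A j) (A i - A j)
      = finner (A i - μ) (A i - μ) + 2 * finner (A i - μ) (-(A j - μ))
          + finner (A j - μ) (A j - μ) := by
    intro i j
    have h : A i - A j = (A i - μ) + (-(A j - μ)) := by abel
    rw [h, finner_expand, finner_neg_neg]
  calc ∑ i, ∑ j, finner (A i - A j) (A i - A j)
      = ∑ i, ((n:ℝ) * finner (A i - μ) (A i - μ)
          + 2 * finner (A i - μ) (-(∑ j, (A j - μ)))
          + ∑ j, finner (A j - μ) (A j - μ)) := by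
        refine Finset.sum_congr rfl fun i _ => ?_
        rw [Finset.sum_congr rfl fun j _ => expand i j, Finset.sum_add_distrib,
          Finset.sum_add_distrib, Finset.sum_const, Finset.card_univ, Fintype.card_fin,
          nsmul_eq_mul, ← Finset.mul_sum, ← finner_sum_right, Finset.sum_neg_distrib]
    _ = 2 * (n:ℝ) * ∑ i, finner (A i - μ) (A i - μ) := by
        rw [hsum, neg_zero]
        simp only [finner_zero_right, mul_zero, add_zero]
        rw [Finset.sum_add_distrib, ← Finset.mul_sum, Finset.sum_const, Finset.card_univ,
          Fintype.card_fin, nsmul_eq_mul]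
        ring

end Var

section LPsec

variable {l m n : ℕ}

lemma act_mem_LP {X : Matrix (Fin l) (Fin m) ℝ} (σ : Equiv.Perm (Fin l)) (h : X ∈ LP l m) :
    act σ X ∈ LP l m := by
  refine ⟨fun k j => h.1 _ j, fun j => ?_⟩
  have : (∑ k, act σ X k j) = ∑ k, X (σ⁻¹ k) j := rfl
  rw [this, Equiv.sum_comp (σ⁻¹ : Equiv.Perm (Fin l)) (fun k => X k j)]
  exact h.2 j

lemma orbit_mem_LP {X Y : Matrix (Fin l) (Fin m) ℝ} (hX : X ∈ LP l m) (hY : Y ∈ orbit X) :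
    Y ∈ LP l m := by
  obtain ⟨σ, rfl⟩ := hY; exact act_mem_LP σ hX

lemma mean_mem_LP (hn : 0 < n) (A : Fin n → Matrix (Fin l) (Fin m) ℝ)
    (h : ∀ i, A i ∈ LP l m) : ((n:ℝ)⁻¹ • ∑ j, A j) ∈ LP l m := by
  have hne : (n:ℝ) ≠ 0 := Nat.cast_ne_zero.mpr hn.ne'
  have hpos : (0:ℝ) < n := by exact_mod_cast hn
  have happ : ∀ k j, ((n:ℝ)⁻¹ • ∑ i, A i) k j = (n:ℝ)⁻¹ * ∑ i, A i k j := by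
    intro k j
    simp [Matrix.smul_apply, Matrix.sum_apply]
  constructor
  · intro k j
    rw [happ]
    constructor
    · exact mul_nonneg (inv_nonneg.mpr hpos.le)
        (Finset.sum_nonneg fun i _ => ((h i).1 k j).1)
    · have hle : ∑ i, A i k j ≤ (n:ℝ) := by
        calc ∑ i, A i k j ≤ ∑ _i : Fin n, (1:ℝ) :=
              Finset.sum_le_sum fun i _ => ((h i).1 k j).2
          _ = n := by simp
      calc (n:ℝ)⁻¹ * ∑ i, A i k j ≤ (n:ℝ)⁻¹ * n :=
            mul_le_mul_of_nonneg_left hle (inv_nonneg.mpr hpos.le)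
        _ = 1 := inv_mul_cancel₀ hne
  · intro j
    calc ∑ k, ((n:ℝ)⁻¹ • ∑ i, A i) k j = ∑ k, (n:ℝ)⁻¹ * ∑ i, A i k j :=
          Finset.sum_congr rfl fun k _ => happ k j
      _ = (n:ℝ)⁻¹ * ∑ i, ∑ k, A i k j := by rw [← Finset.mul_sum, Finset.sum_comm]
      _ = (n:ℝ)⁻¹ * ∑ _i : Fin n, (1:ℝ) := by
          rw [Finset.sum_congr rfl fun i _ => (h i).2 j]
      _ = 1 := by
          simp only [Finset.sum_const, Finset.card_univ, Fintype.card_fin, nsmul_eq_mul, mul_one]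
          exact inv_mul_cancel₀ hne

end LPsec

theorem mean_partition_iff_optimal_alignment (l m n : ℕ) (hn : 0 < n)
    (X : Fin n → Matrix (Fin l) (Fin m) ℝ) (hX : ∀ i, X i ∈ LP l m) :
    (∀ A : Fin n → Matrix (Fin l) (Fin m) ℝ, (∀ i, A i ∈ orbit (X i)) →
      (∀ B : Fin n → Matrix (Fin l) (Fin m) ℝ, (∀ i, B i ∈ orbit (X i)) →
        ((n : ℝ) ^ 2)⁻¹ * ∑ i, ∑ j, (fnorm (A i - A j)) ^ 2 ≤
        ((n : ℝ) ^ 2)⁻¹ * ∑ i, ∑ j, (fnorm (B i - B j)) ^ 2) →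
      ∀ Z ∈ LP l m,
        (n : ℝ)⁻¹ * ∑ i, (pdist (orbit (X i)) (orbit ((n : ℝ)⁻¹ • ∑ j, A j))) ^ 2 ≤
        (n : ℝ)⁻¹ * ∑ i, (pdist (orbit (X i)) (orbit Z)) ^ 2) ∧
    (∀ M ∈ LP l m,
      (∀ Z ∈ LP l m,
        (n : ℝ)⁻¹ * ∑ i, (pdist (orbit (X i)) (orbit M)) ^ 2 ≤
        (n : ℝ)⁻¹ * ∑ i, (pdist (orbit (X i)) (orbit Z)) ^ 2) →
      ∃ A : Fin n → Matrix (Fin l) (Fin m) ℝ, (∀ i, A i ∈ orbit (X i)) ∧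
        (∀ B : Fin n → Matrix (Fin l) (Fin m) ℝ, (∀ i, B i ∈ orbit (X i)) →
          ((n : ℝ) ^ 2)⁻¹ * ∑ i, ∑ j, (fnorm (A i - A j)) ^ 2 ≤
          ((n : ℝ) ^ 2)⁻¹ * ∑ i, ∑ j, (fnorm (B i - B j)) ^ 2) ∧
        orbit ((n : ℝ)⁻¹ • ∑ j, A j) = orbit M) := by
  have hne : (n:ℝ) ≠ 0 := Nat.cast_ne_zero.mpr hn.ne'
  have hnpos : (0:ℝ) < n := by exact_mod_cast hn
  constructor
  · -- Part 1: optimal alignment gives a mean partition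
    intro A hA hopt Z hZ
    set μA : Matrix (Fin l) (Fin m) ℝ := (n:ℝ)⁻¹ • ∑ j, A j with hμA
    choose σB hσB using fun i => pdist_exists (X i) Z
    set B : Fin n → Matrix (Fin l) (Fin m) ℝ := fun i => act (σB i) (X i) with hBdef
    have hBmem : ∀ i, B i ∈ orbit (X i) := fun i => act_mem_orbit _ _
    set μB : Matrix (Fin l) (Fin m) ℝ := (n:ℝ)⁻¹ • ∑ j, B j with hμB
    refine mul_le_mul_of_nonneg_left ?_ (inv_nonneg.mpr hnpos.le)
    have step1 : ∑ i, pdist (orbit (X i)) (orbit μA) ^ 2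
        ≤ ∑ i, finner (A i - μA) (A i - μA) :=
      Finset.sum_le_sum fun i _ =>
        (pdist_sq_le (hA i) (mem_orbit_self μA)).trans_eq (fnorm_sq _)
    have step2 : ∑ i, finner (A i - μA) (A i - μA) ≤ ∑ i, finner (B i - μB) (B i - μB) := by
      have h1 := le_of_mul_le_mul_left (hopt B hBmem) (by positivity : (0:ℝ) < ((n:ℝ)^2)⁻¹)
      simp only [fnorm_sq] at h1
      rw [sum_sum_var hn A, sum_sum_var hn B] at h1
      exact le_of_mul_le_mul_left h1 (by positivity)
    have step3 : ∑ i, finner (B i - μB) (B i - μB) ≤ ∑ i, finner (B i - Z) (B i - Z) := by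
      rw [sum_var hn B Z]
      exact le_add_of_nonneg_right (mul_nonneg hnpos.le (finner_nonneg _))
    have step4 : ∑ i, finner (B i - Z) (B i - Z)
        = ∑ i, pdist (orbit (X i)) (orbit Z) ^ 2 := by
      refine Finset.sum_congr rfl fun i _ => ?_
      rw [hσB i, fnorm_sq]
    exact ((step1.trans step2).trans step3).trans_eq step4
  · -- Part 2: every mean partition arises from an optimal alignment
    intro M hM hMopt
    have hstrip : ∀ Z ∈ LP l m, ∑ i, pdist (orbit (X i)) (orbit M) ^ 2
        ≤ ∑ i, pdist (orbit (X i)) (orbit Z) ^ 2 :=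
      fun Z hZ => le_of_mul_le_mul_left (hMopt Z hZ) (inv_pos.mpr hnpos)
    choose σA hσA using fun i => pdist_exists (X i) M
    set A : Fin n → Matrix (Fin l) (Fin m) ℝ := fun i => act (σA i) (X i) with hAdef
    have hAmem : ∀ i, A i ∈ orbit (X i) := fun i => act_mem_orbit _ _
    set μA : Matrix (Fin l) (Fin m) ℝ := (n:ℝ)⁻¹ • ∑ j, A j with hμA
    have hμALP : μA ∈ LP l m := mean_mem_LP hn A fun i => orbit_mem_LP (hX i) (hAmem i)
    have hAM : ∑ i, finner (A i - M) (A i - M)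
        = ∑ i, pdist (orbit (X i)) (orbit M) ^ 2 := by
      refine Finset.sum_congr rfl fun i _ => ?_
      rw [hσA i, fnorm_sq]
    have hle1 : ∑ i, pdist (orbit (X i)) (orbit M) ^ 2
        ≤ ∑ i, pdist (orbit (X i)) (orbit μA) ^ 2 := hstrip μA hμALP
    have hle2 : ∑ i, pdist (orbit (X i)) (orbit μA) ^ 2
        ≤ ∑ i, finner (A i - μA) (A i - μA) :=
      Finset.sum_le_sum fun i _ =>
        (pdist_sq_le (hAmem i) (mem_orbit_self μA)).trans_eq (fnorm_sq _)
    have hvar := sum_var hn A M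
    have hQnn := finner_nonneg (μA - M)
    have hzero : finner (μA - M) (μA - M) = 0 := by nlinarith
    have hμM : μA = M := sub_eq_zero.mp (eq_zero_of_finner_self hzero)
    refine ⟨A, hAmem, ?_, by rw [← hμA, hμM]⟩
    intro B hBmem
    refine mul_le_mul_of_nonneg_left ?_ (by positivity)
    simp only [fnorm_sq]
    set μB : Matrix (Fin l) (Fin m) ℝ := (n:ℝ)⁻¹ • ∑ j, B j with hμB
    have hμBLP : μB ∈ LP l m := mean_mem_LP hn B fun i => orbit_mem_LP (hX i) (hBmem i)
    rw [sum_sum_var hn A, sum_sum_var hn B]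
    refine mul_le_mul_of_nonneg_left ?_ (by positivity)
    have c1 : ∑ i, finner (A i - μA) (A i - μA) ≤ ∑ i, finner (A i - M) (A i - M) := by
      rw [sum_var hn A M]
      exact le_add_of_nonneg_right (mul_nonneg hnpos.le (finner_nonneg _))
    have c2 := hstrip μB hμBLP
    have c3 : ∑ i, pdist (orbit (X i)) (orbit μB) ^ 2
        ≤ ∑ i, finner (B i - μB) (B i - μB) :=
      Finset.sum_le_sum fun i _ =>
        (pdist_sq_le (hBmem i) (mem_orbit_self μB)).trans_eq (fnorm_sq _)
    linarith
end
end
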